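/- arXiv:2107.10316 — 3 statements merged into one kernel-verified Lean document; each statement's English description precedes it below -/
import Mathlib

section
/- Let H be an orthogonal projection and A a bounded operator on a Hilbert space. Let E(A) = (1/2π)∫₀^{2π} e^{iθH} A e^{-iθH} dθ. Then ‖A − E(A)‖ ≤ π‖[H,A]‖. -/
set_option maxHeartbeats 1000000
set_option linter.unusedSectionVars false


open NormedSpace

variable {E : Type*} [NormedAddCommGroup E] [InnerProductSpace ℂ E] [CompleteSpace E]

/-- The average of `A` over conjugation by `e^{iθH}`, `θ` uniform on `[0, 2π]`. -/
noncomputable def conjAvg (H A : E →L[ℂ] E) : E →L[ℂ] E :=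
  (1 / (2 * Real.pi)) • ∫ θ in (0:ℝ)..(2 * Real.pi),
    exp (((θ : ℂ) * Complex.I) • H) * A * star (exp (((θ : ℂ) * Complex.I) • H))

/-- Iterated conjugation average `E_S` over the projections `H r`, `r ∈ S`. -/
noncomputable def conjAvgOver {n : ℕ} (H : Fin n → (E →L[ℂ] E)) (S : Finset (Fin n))
    (A : E →L[ℂ] E) : E →L[ℂ] E :=
  (S.sort (· ≤ ·)).foldr (fun r B => conjAvg (H r) B) A



lemma idem_pow {H : E →L[ℂ] E} (hidem : H * H = H) : ∀ n : ℕ, H ^ (n + 1) = H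
  | 0 => pow_one H
  | n + 1 => by rw [pow_succ, idem_pow hidem n, hidem]

lemma exp_smul_idem {H : E →L[ℂ] E} (hidem : H * H = H) (z : ℂ) :
    exp (z • H) = 1 + (Complex.exp z - 1) • H := by
  have hsum := expSeries_summable' (𝕂 := ℂ) (z • H)
  have hc : Summable fun n : ℕ => ((n.factorial : ℂ))⁻¹ * z ^ n := by
    simpa [smul_eq_mul] using expSeries_summable' (𝕂 := ℂ) z
  have hc1 : Summable fun n : ℕ => (((n+1).factorial : ℂ))⁻¹ * z ^ (n + 1) :=
    (summable_nat_add_iff 1).mpr hc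
  have hterm : ∀ n : ℕ, ((((n+1).factorial : ℂ))⁻¹ : ℂ) • (z • H) ^ (n + 1)
      = ((((n+1).factorial : ℂ))⁻¹ * z ^ (n + 1)) • H := by
    intro n
    rw [smul_pow, idem_pow hidem, smul_smul]
  have hexp : ∑' n : ℕ, (((n+1).factorial : ℂ))⁻¹ * z ^ (n + 1) = Complex.exp z - 1 := by
    have h0 : Complex.exp z = ∑' n : ℕ, ((n.factorial : ℂ))⁻¹ * z ^ n := by
      rw [Complex.exp_eq_exp_ℂ, exp_eq_tsum ℂ]
      simp [smul_eq_mul]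
    rw [Summable.tsum_eq_zero_add hc] at h0
    simp only [Nat.factorial_zero, Nat.cast_one, inv_one, pow_zero, mul_one] at h0
    rw [h0]; ring
  rw [exp_eq_tsum ℂ]
  show ∑' n : ℕ, ((n.factorial : ℂ))⁻¹ • (z • H) ^ n = _
  rw [Summable.tsum_eq_zero_add hsum]
  simp only [Nat.factorial_zero, Nat.cast_one, inv_one, pow_zero, one_smul]
  rw [tsum_congr hterm, hc1.tsum_smul_const, hexp]

open Complex intervalIntegral in
lemma integral_exp_I : (∫ θ in (0:ℝ)..(2*Real.pi), Complex.exp ((θ:ℂ) * Complex.I)) = 0 := by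
  have h : ∀ θ : ℝ, Complex.exp ((θ:ℂ) * Complex.I) = Complex.exp (Complex.I * (θ:ℂ)) := by
    intro θ; ring_nf
  simp_rw [h]
  rw [integral_exp_mul_complex Complex.I_ne_zero]
  have : Complex.I * ((2*Real.pi : ℝ) : ℂ) = 2 * Real.pi * Complex.I := by push_cast; ring
  rw [this, Complex.exp_two_pi_mul_I]
  simp

open Complex intervalIntegral in
lemma integral_exp_negI : (∫ θ in (0:ℝ)..(2*Real.pi), Complex.exp (-((θ:ℂ) * Complex.I))) = 0 := by
  have h : ∀ θ : ℝ, Complex.exp (-((θ:ℂ) * Complex.I)) = Complex.exp ((-Complex.I) * (θ:ℂ)) := by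
    intro θ; ring_nf
  simp_rw [h]
  rw [integral_exp_mul_complex (neg_ne_zero.mpr Complex.I_ne_zero)]
  have : (-Complex.I) * ((2*Real.pi : ℝ) : ℂ) = -(2 * Real.pi * Complex.I) := by push_cast; ring
  rw [this, Complex.exp_neg, Complex.exp_two_pi_mul_I]
  simp

lemma conjAvg_eq' (H A : E →L[ℂ] E) (hH : IsSelfAdjoint H) (hidem : H * H = H) :
    (∫ θ in (0:ℝ)..(2 * Real.pi),
      exp (((θ : ℂ) * Complex.I) • H) * A * star (exp (((θ : ℂ) * Complex.I) • H)))
    = (2*Real.pi : ℝ) • A + (-(2*(Real.pi:ℂ))) • (H*A) + (-(2*(Real.pi:ℂ))) • (A*H)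
      + ((4*(Real.pi:ℂ))) • (H*A*H) := by
  set a : ℝ → ℂ := fun θ => Complex.exp ((θ:ℂ) * Complex.I) - 1 with ha_def
  set b : ℝ → ℂ := fun θ => Complex.exp (-((θ:ℂ) * Complex.I)) - 1 with hb_def
  have hce : Continuous (fun θ : ℝ => Complex.exp ((θ:ℂ) * Complex.I)) := by fun_prop
  have hce' : Continuous (fun θ : ℝ => Complex.exp (-((θ:ℂ) * Complex.I))) := by fun_prop
  have hca : Continuous a := by fun_prop
  have hcb : Continuous b := by fun_prop
  have hint : ∀ θ : ℝ,
      exp (((θ : ℂ) * Complex.I) • H) * A * star (exp (((θ : ℂ) * Complex.I) • H))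
      = A + a θ • (H*A) + b θ • (A*H) + (a θ * b θ) • (H*A*H) := by
    intro θ
    have hstar : star (exp (((θ : ℂ) * Complex.I) • H)) = 1 + b θ • H := by
      rw [exp_smul_idem hidem, star_add, star_one, star_smul, hH.star_eq]
      congr 1
      congr 1
      show (starRingEnd ℂ) (Complex.exp ((θ:ℂ) * Complex.I) - 1) = _
      rw [map_sub, map_one, ← Complex.exp_conj]
      congr 2
      simp [Complex.conj_I]
    rw [hstar, exp_smul_idem hidem]
    show ((1:E →L[ℂ] E) + a θ • H) * A * (1 + b θ • H) = _
    simp only [add_mul, mul_add, one_mul, mul_one, smul_mul_assoc, mul_smul_comm, smul_smul,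
      smul_add, mul_assoc]
    module
  rw [intervalIntegral.integral_congr (fun θ _ => hint θ)]
  have i1 : IntervalIntegrable (fun _ : ℝ => A) MeasureTheory.volume 0 (2*Real.pi) :=
    intervalIntegrable_const
  have i2 : IntervalIntegrable (fun θ : ℝ => a θ • (H*A)) MeasureTheory.volume 0 (2*Real.pi) :=
    (hca.smul continuous_const).intervalIntegrable _ _
  have i3 : IntervalIntegrable (fun θ : ℝ => b θ • (A*H)) MeasureTheory.volume 0 (2*Real.pi) :=
    (hcb.smul continuous_const).intervalIntegrable _ _
  have i4 : IntervalIntegrable (fun θ : ℝ => (a θ * b θ) • (H*A*H)) MeasureTheory.volume 0 (2*Real.pi) :=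
    ((hca.mul hcb).smul continuous_const).intervalIntegrable _ _
  rw [intervalIntegral.integral_add ((i1.add i2).add i3) i4,
    intervalIntegral.integral_add (i1.add i2) i3,
    intervalIntegral.integral_add i1 i2]
  rw [intervalIntegral.integral_smul_const, intervalIntegral.integral_smul_const,
    intervalIntegral.integral_smul_const, intervalIntegral.integral_const]
  have hia : (∫ θ in (0:ℝ)..(2*Real.pi), a θ) = -(2*(Real.pi:ℂ)) := by
    rw [ha_def]
    dsimp only
    rw [intervalIntegral.integral_sub (hce.intervalIntegrable _ _) intervalIntegrable_const]
    rw [integral_exp_I, intervalIntegral.integral_const]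
    simp [Complex.real_smul]
  have hib : (∫ θ in (0:ℝ)..(2*Real.pi), b θ) = -(2*(Real.pi:ℂ)) := by
    rw [hb_def]
    dsimp only
    rw [intervalIntegral.integral_sub (hce'.intervalIntegrable _ _) intervalIntegrable_const]
    rw [integral_exp_negI, intervalIntegral.integral_const]
    simp [Complex.real_smul]
  have hiab : (∫ θ in (0:ℝ)..(2*Real.pi), a θ * b θ) = (4*(Real.pi:ℂ)) := by
    have hab : ∀ θ : ℝ, a θ * b θ = 2 - Complex.exp ((θ:ℂ) * Complex.I) - Complex.exp (-((θ:ℂ) * Complex.I)) := by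
      intro θ
      have h1 : Complex.exp ((θ:ℂ) * Complex.I) * Complex.exp (-((θ:ℂ) * Complex.I)) = 1 := by
        rw [← Complex.exp_add]; simp
      rw [ha_def, hb_def]
      dsimp only
      linear_combination h1
    simp_rw [hab]
    rw [intervalIntegral.integral_sub (intervalIntegrable_const.sub
        (hce.intervalIntegrable _ _)) (hce'.intervalIntegrable _ _),
      intervalIntegral.integral_sub intervalIntegrable_const (hce.intervalIntegrable _ _),
      integral_exp_I, integral_exp_negI, intervalIntegral.integral_const]
    simp [Complex.real_smul]; ring
  rw [hia, hib, hiab]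
  simp

lemma proj_norm_le_one {P : E →L[ℂ] E} (hP : IsSelfAdjoint P) (h : P * P = P) : ‖P‖ ≤ 1 := by
  refine P.opNorm_le_bound zero_le_one (fun x => ?_)
  rw [one_mul]
  have hsym := ContinuousLinearMap.isSelfAdjoint_iff_isSymmetric.mp hP
  have h1 : inner ℂ (P x) (P x) = (inner ℂ x (P x) : ℂ) := by
    have h2 := hsym x (P x)
    simp only [ContinuousLinearMap.coe_coe] at h2
    have h3 : P (P x) = P x := by
      have := congrFun (congrArg (fun T : E →L[ℂ] E => (T : E → E)) h) x
      simpa [ContinuousLinearMap.mul_apply] using this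
    rw [h3] at h2
    exact h2
  have h4 : (‖P x‖ : ℝ)^2 = ‖(inner ℂ x (P x) : ℂ)‖ := by
    rw [← h1, inner_self_eq_norm_sq_to_K]
    simp [sq_abs]
  have h5 : ‖(inner ℂ x (P x) : ℂ)‖ ≤ ‖x‖ * ‖P x‖ := norm_inner_le_norm x (P x)
  nlinarith [norm_nonneg (P x), norm_nonneg x]


/-- For an orthogonal projection `H` and bounded operator `A`, with
`E(A) = (1/2π)∫₀^{2π} e^{iθH} A e^{-iθH} dθ`, one has `‖A − E(A)‖ ≤ π‖[H,A]‖`. -/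
theorem norm_sub_conjAvg_le
    (H A : E →L[ℂ] E) (hH : IsSelfAdjoint H) (hidem : H * H = H) :
    ‖A - conjAvg H A‖ ≤ Real.pi * ‖H * A - A * H‖ := by
  set C : E →L[ℂ] E := H * A - A * H with hC
  have hdiff : A - conjAvg H A = H * C - C * H := by
    rw [conjAvg, conjAvg_eq' H A hH hidem, hC]
    have e1 : H * (H * A - A * H) - (H * A - A * H) * H
        = H * A + A * H - ((H*A*H) + (H*A*H)) := by
      have k1 : H * (H * A) = H * A := by rw [← mul_assoc, hidem]
      have k2 : A * H * H = A * H := by rw [mul_assoc, hidem]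
      simp only [mul_sub, sub_mul, k1, k2, mul_assoc]
      abel
    rw [e1]
    have hpi : (Real.pi : ℂ) ≠ 0 := by exact_mod_cast Real.pi_ne_zero
    match_scalars <;> field_simp <;> simp <;> ring_nf
  rw [hdiff]
  have hH1 : ‖H‖ ≤ 1 := proj_norm_le_one hH hidem
  have h1 : ‖H * C - C * H‖ ≤ ‖H‖ * ‖C‖ + ‖C‖ * ‖H‖ :=
    le_trans (norm_sub_le _ _) (add_le_add (norm_mul_le _ _) (norm_mul_le _ _))
  have h2 : ‖H‖ * ‖C‖ + ‖C‖ * ‖H‖ ≤ 2 * ‖C‖ := by nlinarith [norm_nonneg C, norm_nonneg H]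
  have h3 : 2 * ‖C‖ ≤ Real.pi * ‖C‖ := by nlinarith [Real.two_le_pi, norm_nonneg C]
  linarith
end

section
/- Let A be a self-adjoint operator with spectrum in [q_min, q_max] on a finite-dimensional Hilbert space, U a unitary, Ω a unit vector, and suppose there is a real number c such that ⟨Ω, (U*)^k (U*AU − A) U^k Ω⟩ = c for all natural numbers k. Then c = 0. -/
open scoped InnerProductSpace

/-- Let `A` be self-adjoint with spectrum in `[qmin, qmax]` on a
finite-dimensional complex Hilbert space, `U` unitary, `Ω` a unit vector. If there is a real
`c` with `⟨Ω, (U*)^k (U*AU − A) U^k Ω⟩ = c` for all `k`, then `c = 0`. -/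
theorem pumped_charge_vanishes
    {E : Type*} [NormedAddCommGroup E] [InnerProductSpace ℂ E] [FiniteDimensional ℂ E]
    (A U : E →L[ℂ] E) (qmin qmax : ℝ)
    (hA : IsSelfAdjoint A)
    (hspec : ∀ z ∈ spectrum ℂ A, z.re ∈ Set.Icc qmin qmax ∧ z.im = 0)
    (hU : U ∈ unitary (E →L[ℂ] E))
    (Ω : E) (hΩ : ‖Ω‖ = 1) (c : ℝ)
    (hc : ∀ k : ℕ,
      ⟪Ω, ((star U) ^ k * (star U * A * U - A) * U ^ k) Ω⟫_ℂ = (c : ℂ)) :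
    c = 0 := by
  set f : ℕ → ℂ := fun n => ⟪Ω, ((star U) ^ n * A * U ^ n) Ω⟫_ℂ with hf
  have hstep : ∀ k : ℕ, f (k + 1) - f k = (c : ℂ) := by
    intro k
    have hexpand : (star U) ^ k * (star U * A * U - A) * U ^ k
        = (star U) ^ (k + 1) * A * U ^ (k + 1) - (star U) ^ k * A * U ^ k := by
      rw [pow_succ, pow_succ']
      noncomm_ring
    have := hc k
    rw [hexpand] at this
    simpa [f, inner_sub_right] using this
  have hsum : ∀ n : ℕ, f n - f 0 = n * (c : ℂ) := by
    intro n
    have := Finset.sum_range_sub f n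
    rw [← this]
    simp [hstep]
  -- bound |f n| ≤ ‖A‖
  have hbound : ∀ n : ℕ, ‖f n‖ ≤ ‖A‖ := by
    intro n
    have hUn : U ^ n ∈ unitary (E →L[ℂ] E) := pow_mem hU n
    have hnorm : ‖(U ^ n) Ω‖ = 1 := by
      rw [ContinuousLinearMap.norm_map_of_mem_unitary hUn, hΩ]
    have hrw : f n = ⟪(U ^ n) Ω, A ((U ^ n) Ω)⟫_ℂ := by
      have hadj : (star U) ^ n = ContinuousLinearMap.adjoint (U ^ n) := by
        rw [← star_pow, ContinuousLinearMap.star_eq_adjoint]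
      simp only [f, hadj, ContinuousLinearMap.mul_apply,
        ContinuousLinearMap.adjoint_inner_right]
    rw [hrw]
    calc ‖⟪(U ^ n) Ω, A ((U ^ n) Ω)⟫_ℂ‖ ≤ ‖(U ^ n) Ω‖ * ‖A ((U ^ n) Ω)‖ :=
          norm_inner_le_norm _ _
      _ ≤ ‖(U ^ n) Ω‖ * (‖A‖ * ‖(U ^ n) Ω‖) := by
          gcongr; exact A.le_opNorm _
      _ = ‖A‖ := by rw [hnorm]; ring
  have key : ∀ n : ℕ, (n : ℝ) * |c| ≤ 2 * ‖A‖ := by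
    intro n
    have h1 : ‖(n : ℂ) * (c : ℂ)‖ ≤ 2 * ‖A‖ := by
      rw [← hsum n]
      calc ‖f n - f 0‖ ≤ ‖f n‖ + ‖f 0‖ := norm_sub_le _ _
        _ ≤ ‖A‖ + ‖A‖ := add_le_add (hbound n) (hbound 0)
        _ = 2 * ‖A‖ := by ring
    have h2 : ‖(n : ℂ) * (c : ℂ)‖ = (n : ℝ) * |c| := by
      rw [norm_mul, Complex.norm_natCast, Complex.norm_real, Real.norm_eq_abs]
    rw [h2] at h1
    exact h1
  by_contra hcne
  have hpos : 0 < |c| := abs_pos.mpr hcne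
  obtain ⟨n, hn⟩ := exists_nat_gt ((2 * ‖A‖) / |c|)
  have := key n
  have h2 : (n : ℝ) * |c| > 2 * ‖A‖ := by
    rw [gt_iff_lt, ← div_lt_iff₀ hpos] at *
    exact hn
  linarith
end

section
/- Let P be an orthogonal projection with Tr(P) > 0 on a finite-dimensional Hilbert space, and X, Q bounded operators. Then |Tr(P[X,Q])|/Tr(P) ≤ 2‖Q‖·‖[X,P]‖, where ‖·‖ is the operator norm. -/
open scoped InnerProductSpace

section Aux

variable {E : Type*} [NormedAddCommGroup E] [InnerProductSpace ℂ E] [FiniteDimensional ℂ E]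

private lemma trace_inner_formula' (f : E →ₗ[ℂ] E) :
    LinearMap.trace ℂ E f = ∑ i, ⟪(stdOrthonormalBasis ℂ E) i, f ((stdOrthonormalBasis ℂ E) i)⟫_ℂ := by
  rw [LinearMap.trace_eq_matrix_trace ℂ (stdOrthonormalBasis ℂ E).toBasis, Matrix.trace]
  simp [Matrix.diag, LinearMap.toMatrix_apply, OrthonormalBasis.coe_toBasis_repr_apply,
    OrthonormalBasis.repr_apply_apply, OrthonormalBasis.coe_toBasis]

private lemma key_bound' (P M : E →L[ℂ] E) (hP : IsSelfAdjoint P) (hidem : P * P = P) :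
    ‖LinearMap.trace ℂ E ↑(P * M)‖ ≤ ‖M‖ * (LinearMap.trace ℂ E ↑P).re := by
  set b := stdOrthonormalBasis ℂ E with hb
  have hadj : ContinuousLinearMap.adjoint P = P := hP
  have hPinner : ∀ x y : E, ⟪x, P y⟫_ℂ = ⟪P x, y⟫_ℂ := by
    intro x y; conv_lhs => rw [← hadj]
    rw [ContinuousLinearMap.adjoint_inner_right]
  have h1 : LinearMap.trace ℂ E ↑(P * M) = ∑ i, ⟪P (b i), M (P (b i))⟫_ℂ := by
    have h2 : LinearMap.trace ℂ E ↑(P * M)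
        = LinearMap.trace ℂ E (↑P * ↑M * ↑P : E →ₗ[ℂ] E) := by
      conv_lhs => rw [← hidem]
      show LinearMap.trace ℂ E (↑P * (↑P * ↑M) : E →ₗ[ℂ] E) = _
      rw [LinearMap.trace_mul_comm]
    rw [h2, trace_inner_formula']
    refine Finset.sum_congr rfl fun i _ => ?_
    show ⟪b i, P (M (P (b i)))⟫_ℂ = _
    rw [hPinner]
  have h3 : (LinearMap.trace ℂ E ↑P).re = ∑ i, ‖P (b i)‖ ^ 2 := by
    rw [trace_inner_formula']
    rw [Complex.re_sum]
    refine Finset.sum_congr rfl fun i _ => ?_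
    show (⟪b i, P (b i)⟫_ℂ).re = _
    have : ⟪b i, P (b i)⟫_ℂ = ⟪P (b i), P (b i)⟫_ℂ := by
      conv_lhs => rw [← hidem]
      show ⟪b i, P (P (b i))⟫_ℂ = _
      rw [hPinner]
    rw [this]
    exact inner_self_eq_norm_sq (𝕜 := ℂ) _
  rw [h1, h3, Finset.mul_sum]
  refine (norm_sum_le _ _).trans (Finset.sum_le_sum fun i _ => ?_)
  calc ‖⟪P (b i), M (P (b i))⟫_ℂ‖ ≤ ‖P (b i)‖ * ‖M (P (b i))‖ := norm_inner_le_norm _ _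
    _ ≤ ‖P (b i)‖ * (‖M‖ * ‖P (b i)‖) := by gcongr; exact M.le_opNorm _
    _ = ‖M‖ * ‖P (b i)‖ ^ 2 := by ring

private lemma alg_identity' (p x q : Module.End ℂ E) (h : p * p = p) :
    LinearMap.trace ℂ E (p * (x * q - q * x)) =
      -(LinearMap.trace ℂ E (p * ((x * p - p * x) * q)))
        - LinearMap.trace ℂ E (p * (q * (x * p - p * x))) := by
  set T := LinearMap.trace ℂ E with hT
  have e2 : T (p * q * x * p) = T (p * q * x) := by
    rw [LinearMap.trace_mul_comm, ← mul_assoc, ← mul_assoc, h]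
  have e3 : T (p * x * (p * q)) = T (p * q * (p * x)) :=
    LinearMap.trace_mul_comm _ _ _
  simp only [mul_sub, sub_mul, map_sub, ← mul_assoc] at *
  rw [h]
  linear_combination e3 + e2

end Aux

/-- On a finite-dimensional complex Hilbert space, for an orthogonal
projection `P` with `Tr(P) > 0` and bounded operators `X, Q`:
`|Tr(P[X,Q])| / Tr(P) ≤ 2‖Q‖·‖[X,P]‖` in operator norm. -/
theorem trace_commutator_div_trace_le
    {E : Type*} [NormedAddCommGroup E] [InnerProductSpace ℂ E] [FiniteDimensional ℂ E]
    (P X Q : E →L[ℂ] E) (hP : IsSelfAdjoint P) (hidem : P * P = P)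
    (htr : 0 < (LinearMap.trace ℂ E ↑P).re) :
    ‖LinearMap.trace ℂ E ↑(P * (X * Q - Q * X))‖ / (LinearMap.trace ℂ E ↑P).re ≤
      2 * ‖Q‖ * ‖X * P - P * X‖ := by
  set A := X * P - P * X with hA
  have hid : LinearMap.trace ℂ E ↑(P * (X * Q - Q * X)) =
      -(LinearMap.trace ℂ E ↑(P * (A * Q))) - LinearMap.trace ℂ E ↑(P * (Q * A)) := by
    have := alg_identity' (↑P) (↑X) (↑Q) (E := E) (show ((P*P : E →L[ℂ] E) : E →ₗ[ℂ] E) = ↑P by rw [hidem])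
    simpa [hA] using this
  rw [div_le_iff₀ htr, hid]
  have b1 : ‖LinearMap.trace ℂ E ↑(P * (A * Q))‖ ≤ ‖A * Q‖ * (LinearMap.trace ℂ E ↑P).re :=
    key_bound' P (A * Q) hP hidem
  have b2 : ‖LinearMap.trace ℂ E ↑(P * (Q * A))‖ ≤ ‖Q * A‖ * (LinearMap.trace ℂ E ↑P).re :=
    key_bound' P (Q * A) hP hidem
  have hAQ : ‖A * Q‖ ≤ ‖A‖ * ‖Q‖ := norm_mul_le _ _
  have hQA : ‖Q * A‖ ≤ ‖Q‖ * ‖A‖ := norm_mul_le _ _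
  calc ‖-(LinearMap.trace ℂ E ↑(P * (A * Q))) - LinearMap.trace ℂ E ↑(P * (Q * A))‖
      ≤ ‖LinearMap.trace ℂ E ↑(P * (A * Q))‖ + ‖LinearMap.trace ℂ E ↑(P * (Q * A))‖ := by
        simpa using norm_sub_le (-(LinearMap.trace ℂ E ↑(P * (A * Q)))) (LinearMap.trace ℂ E ↑(P * (Q * A)))
    _ ≤ ‖A * Q‖ * (LinearMap.trace ℂ E ↑P).re + ‖Q * A‖ * (LinearMap.trace ℂ E ↑P).re := by
        exact add_le_add b1 b2
    _ ≤ ‖Q‖ * ‖A‖ * (LinearMap.trace ℂ E ↑P).re + ‖Q‖ * ‖A‖ * (LinearMap.trace ℂ E ↑P).re := by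
        exact add_le_add (mul_le_mul_of_nonneg_right (hAQ.trans (le_of_eq (mul_comm _ _))) htr.le)
          (mul_le_mul_of_nonneg_right hQA htr.le)
    _ = 2 * ‖Q‖ * ‖A‖ * (LinearMap.trace ℂ E ↑P).re := by ring
end
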